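/- arXiv:2302.10796 — 2 statements merged into one kernel-verified Lean document; each statement's English description precedes it below -/
import Mathlib

section
/- Let a_1, a_2, ..., a_K be a sequence in [0,1] and define S_k = Σ_{j<k} a_j with S_1 = 0. Then Σ_{k=1}^K a_k / max(1, S_k) ≤ 2(1 + log(1 + Σ_{j=1}^K a_j)). -/
open Matrix

lemma two_log_lb (x : ℝ) (hx0 : 0 ≤ x) (hx1 : x ≤ 1) : x ≤ 2 * Real.log (1 + x) := by
  have hx : (0:ℝ) < 1 + x := by linarith
  have h := Real.log_le_sub_one_of_pos (show (0:ℝ) < (1+x)⁻¹ by positivity)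
  rw [Real.log_inv] at h
  have hinv : (1+x)⁻¹ * (1+x) = 1 := inv_mul_cancel₀ (ne_of_gt hx)
  nlinarith [h, hinv]

lemma key_step (a S : ℝ) (ha0 : 0 ≤ a) (ha1 : a ≤ 1) (hS : 0 ≤ S) :
    a / max 1 S ≤ (min (S + a) 2 - min S 2)
      + 2 * (Real.log (max 1 (S + a)) - Real.log (max 1 S)) := by
  rcases le_or_gt 1 S with h1 | h1
  · have hmS : max 1 S = S := max_eq_right h1
    have hmSa : max 1 (S + a) = S + a := max_eq_right (by linarith)
    have hSpos : (0:ℝ) < S := lt_of_lt_of_le one_pos h1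
    have hx0 : 0 ≤ a / S := div_nonneg ha0 hSpos.le
    have hx1 : a / S ≤ 1 := (div_le_one hSpos).mpr (le_trans ha1 h1)
    have hlog := two_log_lb (a / S) hx0 hx1
    have heq : Real.log (S + a) = Real.log S + Real.log (1 + a / S) := by
      have : S + a = S * (1 + a / S) := by field_simp
      rw [this, Real.log_mul (ne_of_gt hSpos) (by positivity)]
    have hmin : min S 2 ≤ min (S + a) 2 := by
      apply min_le_min _ le_rfl; linarith
    rw [hmS, hmSa, heq]
    linarith
  · have hmS : max 1 S = 1 := max_eq_left h1.le
    have hmin1 : min S 2 = S := min_eq_left (by linarith)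
    have hmin2 : min (S + a) 2 = S + a := min_eq_left (by linarith)
    have hlog : 0 ≤ Real.log (max 1 (S + a)) := Real.log_nonneg (le_max_left _ _)
    rw [hmS, hmin1, hmin2, div_one]
    simp only [Real.log_one]
    linarith

theorem potential_log_bound (K : ℕ) (a : ℕ → ℝ) (ha : ∀ j, 0 ≤ a j ∧ a j ≤ 1) :
    ∑ k ∈ Finset.range K, a k / max 1 (∑ j ∈ Finset.range k, a j) ≤
      2 * (1 + Real.log (1 + ∑ j ∈ Finset.range K, a j)) := by
  have hSnn : ∀ k, 0 ≤ ∑ j ∈ Finset.range k, a j := fun k =>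
    Finset.sum_nonneg fun j _ => (ha j).1
  have main : ∀ K, ∑ k ∈ Finset.range K, a k / max 1 (∑ j ∈ Finset.range k, a j) ≤
      min (∑ j ∈ Finset.range K, a j) 2
        + 2 * Real.log (max 1 (∑ j ∈ Finset.range K, a j)) := by
    intro K
    induction K with
    | zero => simp
    | succ n ih =>
      rw [Finset.sum_range_succ, Finset.sum_range_succ (f := a)]
      have hk := key_step (a n) (∑ j ∈ Finset.range n, a j) (ha n).1 (ha n).2 (hSnn n)
      linarith
  have h := main K
  have hmin : min (∑ j ∈ Finset.range K, a j) 2 ≤ 2 := min_le_right _ _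
  have hlog : Real.log (max 1 (∑ j ∈ Finset.range K, a j)) ≤
      Real.log (1 + ∑ j ∈ Finset.range K, a j) := by
    apply Real.log_le_log (by positivity)
    exact max_le (by linarith [hSnn K]) (by linarith [hSnn K])
  linarith
end

section
/- Let φ, φ̂ ∈ R^d with ||φ̂ - φ||_2 ≤ 2^{-(n_0+1)}, and let Λ ⪰ I_d be positive definite. If ||φ̂'||_{Λ^{-1}} ≥ 2^{-(n_0-1)} for some φ̂' with ||φ̂' - φ||_2 ≤ 2^{-n_0}, then ||φ̂ - φ||_2 ≤ ||φ̂||_{Λ^{-1}}. -/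
open Matrix

noncomputable def euclNorm {d : ℕ} (v : Fin d → ℝ) : ℝ := Real.sqrt (v ⬝ᵥ v)

noncomputable def wnorm {d : ℕ} (A : Matrix (Fin d) (Fin d) ℝ) (v : Fin d → ℝ) : ℝ :=
  Real.sqrt (v ⬝ᵥ A *ᵥ v)

lemma euclNorm_eq {d : ℕ} (v : Fin d → ℝ) :
    euclNorm v = ‖(WithLp.equiv 2 (Fin d → ℝ)).symm v‖ := by
  rw [EuclideanSpace.norm_eq, euclNorm]
  congr 1
  simp [dotProduct, Real.norm_eq_abs, sq_abs, pow_two]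

lemma euclNorm_nonneg {d : ℕ} (v : Fin d → ℝ) : 0 ≤ euclNorm v := Real.sqrt_nonneg _

lemma euclNorm_add_le {d : ℕ} (u v : Fin d → ℝ) : euclNorm (u + v) ≤ euclNorm u + euclNorm v := by
  simp only [euclNorm_eq]
  exact norm_add_le _ _

lemma euclNorm_neg {d : ℕ} (v : Fin d → ℝ) : euclNorm (-v) = euclNorm v := by
  simp only [euclNorm_eq]; exact norm_neg _

lemma dot_le_enorm_mul {d : ℕ} (u v : Fin d → ℝ) : u ⬝ᵥ v ≤ euclNorm u * euclNorm v := by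
  have := real_inner_le_norm ((WithLp.equiv 2 (Fin d → ℝ)).symm u)
    ((WithLp.equiv 2 (Fin d → ℝ)).symm v)
  simp only [euclNorm_eq]
  refine le_trans (le_of_eq ?_) this
  simp [dotProduct, PiLp.inner_apply, RCLike.inner_apply, mul_comm]

lemma quad_nonneg {d : ℕ} {A : Matrix (Fin d) (Fin d) ℝ} (hA : A.PosSemidef)
    (v : Fin d → ℝ) : 0 ≤ v ⬝ᵥ A *ᵥ v := by
  have := hA.dotProduct_mulVec_nonneg v
  simpa using this

lemma wnorm_le_enorm {d : ℕ} {Λ : Matrix (Fin d) (Fin d) ℝ} (hΛ : Λ.PosDef)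
    (hΛ1 : (Λ - 1).PosSemidef) (v : Fin d → ℝ) : wnorm Λ⁻¹ v ≤ euclNorm v := by
  set w := Λ⁻¹ *ᵥ v with hw
  have hsym : Λ⁻¹.IsHermitian := (hΛ.inv).1
  have hq : v ⬝ᵥ Λ⁻¹ *ᵥ v = v ⬝ᵥ w := rfl
  have hqw : w ⬝ᵥ w ≤ v ⬝ᵥ w := by
    have h0 : 0 ≤ w ⬝ᵥ (Λ - 1) *ᵥ w := quad_nonneg hΛ1 w
    have hΛw : Λ *ᵥ w = v := by
      rw [hw, mulVec_mulVec, Matrix.mul_nonsing_inv _ (isUnit_iff_ne_zero.mpr hΛ.det_pos.ne'), one_mulVec]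
    rw [sub_mulVec, dotProduct_sub, hΛw, one_mulVec, dotProduct_comm w v] at h0
    linarith
  have hwn : euclNorm w ≤ euclNorm v := by
    rcases eq_or_lt_of_le (euclNorm_nonneg w) with h | h
    · rw [← h]; exact euclNorm_nonneg v
    · have h1 : euclNorm w * euclNorm w ≤ euclNorm v * euclNorm w := by
        have : euclNorm w * euclNorm w = w ⬝ᵥ w := Real.mul_self_sqrt (by
          simpa [dotProduct] using Finset.sum_nonneg fun i _ => mul_self_nonneg (w i))
        calc euclNorm w * euclNorm w = w ⬝ᵥ w := this
          _ ≤ v ⬝ᵥ w := hqw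
          _ ≤ euclNorm v * euclNorm w := dot_le_enorm_mul v w
      exact le_of_mul_le_mul_right h1 h
  have hqle : v ⬝ᵥ Λ⁻¹ *ᵥ v ≤ euclNorm v * euclNorm v := by
    calc v ⬝ᵥ Λ⁻¹ *ᵥ v = v ⬝ᵥ w := hq
      _ ≤ euclNorm v * euclNorm w := dot_le_enorm_mul v w
      _ ≤ euclNorm v * euclNorm v := by
          exact mul_le_mul_of_nonneg_left hwn (euclNorm_nonneg v)
  rw [wnorm]
  calc Real.sqrt (v ⬝ᵥ Λ⁻¹ *ᵥ v) ≤ Real.sqrt (euclNorm v * euclNorm v) :=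
        Real.sqrt_le_sqrt hqle
    _ = euclNorm v := Real.sqrt_mul_self (euclNorm_nonneg v)

lemma wnorm_eq {d : ℕ} {A B : Matrix (Fin d) (Fin d) ℝ} (hB : A = Bᵀ * B)
    (v : Fin d → ℝ) : wnorm A v = euclNorm (B *ᵥ v) := by
  rw [wnorm, euclNorm, hB, ← mulVec_mulVec, dotProduct_mulVec, vecMul_transpose]

open scoped MatrixOrder Norms.L2Operator in
lemma wnorm_add_le {d : ℕ} {A : Matrix (Fin d) (Fin d) ℝ} (hA : A.PosSemidef)
    (u v : Fin d → ℝ) : wnorm A (u + v) ≤ wnorm A u + wnorm A v := by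
  obtain ⟨B, hB⟩ := CStarAlgebra.nonneg_iff_eq_star_mul_self.mp hA.nonneg
  have hB' : A = Bᵀ * B := by simpa [star_eq_conjTranspose, conjTranspose_eq_transpose_of_trivial] using hB
  rw [wnorm_eq hB', wnorm_eq hB', wnorm_eq hB', mulVec_add]
  exact euclNorm_add_le _ _

theorem feature_estimation_termination {d : ℕ} (n₀ : ℕ) (φ φhat φhat' : Fin d → ℝ)
    (Λ : Matrix (Fin d) (Fin d) ℝ) (hΛ : Λ.PosDef) (hΛ1 : (Λ - 1).PosSemidef)
    (h1 : euclNorm (φhat - φ) ≤ (2 : ℝ) ^ (-((n₀ : ℤ) + 1)))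
    (h2 : (2 : ℝ) ^ (-((n₀ : ℤ) - 1)) ≤ wnorm Λ⁻¹ φhat')
    (h3 : euclNorm (φhat' - φ) ≤ (2 : ℝ) ^ (-(n₀ : ℤ))) :
    euclNorm (φhat - φ) ≤ wnorm Λ⁻¹ φhat := by
  have hinv : Λ⁻¹.PosSemidef := (hΛ.inv).posSemidef
  have tri : wnorm Λ⁻¹ φhat' ≤ wnorm Λ⁻¹ (φhat' - φhat) + wnorm Λ⁻¹ φhat := by
    have := wnorm_add_le hinv (φhat' - φhat) φhat
    simpa using this
  have hle1 : wnorm Λ⁻¹ (φhat' - φhat) ≤ euclNorm (φhat' - φhat) :=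
    wnorm_le_enorm hΛ hΛ1 _
  have hle2 : euclNorm (φhat' - φhat) ≤ euclNorm (φhat' - φ) + euclNorm (φhat - φ) := by
    have := euclNorm_add_le (φhat' - φ) (-(φhat - φ))
    rw [euclNorm_neg] at this
    have he : φhat' - φ + -(φhat - φ) = φhat' - φhat := by abel
    rwa [he] at this
  have key : (2 : ℝ) ^ (-((n₀ : ℤ) + 1)) ≤ wnorm Λ⁻¹ φhat := by
    have harith : (2 : ℝ) ^ (-((n₀ : ℤ) - 1)) =
        (2 : ℝ) ^ (-(n₀ : ℤ)) + (2 : ℝ) ^ (-((n₀ : ℤ) + 1)) + (2 : ℝ) ^ (-((n₀ : ℤ) + 1)) := by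
      have e1 : (-((n₀ : ℤ) - 1)) = (-((n₀ : ℤ) + 1)) + 2 := by ring
      have e2 : (-(n₀ : ℤ)) = (-((n₀ : ℤ) + 1)) + 1 := by ring
      rw [e1, e2, zpow_add₀ (by norm_num : (2:ℝ) ≠ 0), zpow_add₀ (by norm_num : (2:ℝ) ≠ 0)]
      ring
    nlinarith [h2, tri, hle1, hle2, h3, h1]
  exact le_trans h1 key
end
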